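/- For every real λ ≠ 0 and every real t, sinh(λt)·sinh(λ(t-1)) − λ·t·(t-1)·sinh(λ) ≥ 0. -/

import Mathlib

open Real Set

/-- `sinh` is convex on `[0, ∞)`. -/
lemma sinh_convexOn : ConvexOn ℝ (Set.Ici (0:ℝ)) Real.sinh := by
  apply convexOn_of_deriv2_nonneg' (convex_Ici 0)
  · exact Real.differentiable_sinh.differentiableOn
  · rw [Real.deriv_sinh]; exact Real.differentiable_cosh.differentiableOn
  · intro x hx
    have : deriv^[2] Real.sinh x = Real.sinh x := by
      simp [Function.iterate_succ, Real.deriv_sinh, Real.deriv_cosh]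
    rw [this]
    rw [← Real.sinh_zero]
    exact Real.sinh_le_sinh.2 hx

/-- For `0 ≤ u ≤ 1` and `0 ≤ lam`, `sinh (lam*u) ≤ u * sinh lam`. -/
lemma sinh_mul_le (lam u : ℝ) (hl : 0 ≤ lam) (hu0 : 0 ≤ u) (hu1 : u ≤ 1) :
    Real.sinh (lam * u) ≤ u * Real.sinh lam := by
  have h := sinh_convexOn.2 (Set.mem_Ici.2 le_rfl) (Set.mem_Ici.2 hl)
    (by linarith : (0:ℝ) ≤ 1 - u) hu0 (by ring)
  simp only [smul_eq_mul, mul_zero, zero_add, Real.sinh_zero, mul_zero] at h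
  calc Real.sinh (lam * u) = Real.sinh (u * lam) := by ring_nf
    _ ≤ (1 - u) * 0 + u * Real.sinh lam := by simpa using h
    _ = u * Real.sinh lam := by ring

/-- For `1 ≤ u` and `0 ≤ lam`, `u * sinh lam ≤ sinh (lam*u)`. -/
lemma le_sinh_mul (lam u : ℝ) (hl : 0 ≤ lam) (hu : 1 ≤ u) :
    u * Real.sinh lam ≤ Real.sinh (lam * u) := by
  have hu0 : 0 < u := lt_of_lt_of_le one_pos hu
  have hmem : lam * u ∈ Set.Ici (0:ℝ) := Set.mem_Ici.2 (mul_nonneg hl hu0.le)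
  have w1 : (0:ℝ) ≤ 1/u := by positivity
  have w2 : (0:ℝ) ≤ 1 - 1/u := by
    have := (div_le_one hu0).2 hu; linarith
  have wsum : 1/u + (1 - 1/u) = 1 := by ring
  have h := sinh_convexOn.2 hmem (Set.mem_Ici.2 le_rfl) w1 w2 wsum
  simp only [smul_eq_mul, mul_zero, add_zero, Real.sinh_zero] at h
  have key : Real.sinh lam ≤ (1/u) * Real.sinh (lam * u) := by
    have : (1/u) * (lam * u) = lam := by field_simp
    calc Real.sinh lam = Real.sinh (1/u * (lam * u)) := by rw [this]
      _ ≤ 1/u * Real.sinh (lam * u) + (1 - 1/u) * 0 := by simpa using h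
      _ = 1/u * Real.sinh (lam * u) := by ring
  calc u * Real.sinh lam ≤ u * ((1/u) * Real.sinh (lam * u)) := by
        exact mul_le_mul_of_nonneg_left key hu0.le
    _ = Real.sinh (lam * u) := by field_simp

/-- Key inequality: for `lam > 0` and `u ≥ 0`,
`cosh lam + (lam * sinh lam / 2) * (u^2 - 1) ≤ cosh (lam * u)`. -/
lemma key_ineq (lam u : ℝ) (hl : 0 < lam) (hu : 0 ≤ u) :
    Real.cosh lam + (lam * Real.sinh lam / 2) * (u^2 - 1) ≤ Real.cosh (lam * u) := by
  set c : ℝ := lam * Real.sinh lam / 2 with hc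
  set g : ℝ → ℝ := fun x => Real.cosh (lam * x) - c * x^2 with hg
  have hderiv : ∀ x : ℝ, HasDerivAt g (lam * Real.sinh (lam * x) - lam * Real.sinh lam * x) x := by
    intro x
    have h1 : HasDerivAt (fun x : ℝ => Real.cosh (lam * x)) (Real.sinh (lam * x) * lam) x := by
      simpa using (((hasDerivAt_id x).const_mul lam).cosh)
    have h2 : HasDerivAt (fun x : ℝ => c * x^2) (c * (2 * x)) x := by
      simpa using ((hasDerivAt_pow 2 x).const_mul c)
    have := h1.sub h2
    refine this.congr_deriv ?_
    rw [hc]; ring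
  have hdiff : Differentiable ℝ g := fun x => (hderiv x).differentiableAt
  have hcont : Continuous g := hdiff.continuous
  -- g is antitone on [0,1]
  have hanti : AntitoneOn g (Set.Icc 0 1) := by
    apply antitoneOn_of_deriv_nonpos (convex_Icc 0 1) hcont.continuousOn
      (hdiff.differentiableOn)
    intro x hx
    rw [interior_Icc] at hx
    rw [(hderiv x).deriv]
    have h := sinh_mul_le lam x hl.le hx.1.le hx.2.le
    nlinarith [hl]
  -- g is monotone on [1,∞)
  have hmono : MonotoneOn g (Set.Ici 1) := by
    apply monotoneOn_of_deriv_nonneg (convex_Ici 1) hcont.continuousOn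
      (hdiff.differentiableOn)
    intro x hx
    rw [interior_Ici] at hx
    rw [(hderiv x).deriv]
    have h := le_sinh_mul lam x hl.le hx.le
    nlinarith [hl]
  have hg1 : g 1 ≤ g u := by
    rcases le_or_gt u 1 with h | h
    · exact hanti (Set.mem_Icc.2 ⟨hu, h⟩) (Set.mem_Icc.2 ⟨zero_le_one, le_rfl⟩) h
    · exact hmono (Set.mem_Ici.2 le_rfl) (Set.mem_Ici.2 h.le) h.le
  simp only [hg, mul_one, one_pow] at hg1
  nlinarith [hg1]

/-- The main inequality for positive `lam`. -/
lemma main_pos (lam t : ℝ) (hl : 0 < lam) :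
    0 ≤ Real.sinh (lam * t) * Real.sinh (lam * (t - 1)) - lam * t * (t - 1) * Real.sinh lam := by
  set u : ℝ := |2 * t - 1| with hu
  have hu0 : 0 ≤ u := abs_nonneg _
  have hkey := key_ineq lam u hl hu0
  have hcosh : Real.cosh (lam * u) = Real.cosh (lam * (2 * t - 1)) := by
    rw [hu, ← Real.cosh_abs (lam * (2*t-1)), abs_mul, abs_of_pos hl]
  have husq : u^2 = (2*t-1)^2 := sq_abs _
  rw [hcosh, husq] at hkey
  -- product formula: cosh(A+B) - cosh(A-B) = 2 sinh A sinh B, A = lam*t, B = lam*(t-1)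
  have hA : Real.cosh (lam * (2*t-1)) = Real.cosh (lam*t) * Real.cosh (lam*(t-1))
      + Real.sinh (lam*t) * Real.sinh (lam*(t-1)) := by
    rw [show lam*(2*t-1) = lam*t + lam*(t-1) by ring, Real.cosh_add]
  have hB := Real.cosh_sub (lam*t) (lam*(t-1))
  rw [show lam*t - lam*(t-1) = lam by ring] at hB
  nlinarith [hkey, hA, hB]

theorem stmt_15 (lam t : ℝ) (hlam : lam ≠ 0) :
    0 ≤ Real.sinh (lam * t) * Real.sinh (lam * (t - 1)) - lam * t * (t - 1) * Real.sinh lam := by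
  rcases hlam.lt_or_gt with h | h
  · have := main_pos (-lam) t (by linarith)
    have e1 : -lam * t = -(lam * t) := by ring
    have e2 : -lam * (t - 1) = -(lam * (t - 1)) := by ring
    rw [e1, e2, Real.sinh_neg, Real.sinh_neg, Real.sinh_neg] at this
    nlinarith [this]
  · exact main_pos lam t h
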